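/- The series ∑_{n=0}^∞ ((1/12)_n (5/12)_n)/((1)_n n!) converges and equals 3^{1/4} Γ(1/4)/(2 √π Γ(3/4)); equivalently, ₂F₁(1/12, 5/12; 1; 1) = (3^{1/4}/2) · Ω_{-4}/π, where Ω_{-4} = √π Γ(1/4)/Γ(3/4). -/

import Mathlib

open scoped BigOperators
open Real

/-- The ascending Pochhammer factorial `(a)_n = a (a+1) ⋯ (a+n-1)`. -/
noncomputable def poch (a : ℝ) (n : ℕ) : ℝ := ∏ i ∈ Finset.range n, (a + i)

noncomputable def poch' (a : ℝ) (n : ℕ) : ℝ := ∏ i ∈ Finset.range n, (a + i)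

lemma poch_eq_poch' (a : ℝ) (n : ℕ) : poch a n = poch' a n := rfl

lemma poch'_succ (a : ℝ) (n : ℕ) : poch' a (n + 1) = poch' a n * (a + n) := by
  simp [poch', Finset.prod_range_succ]

lemma poch'_nonneg {a : ℝ} (ha : 0 ≤ a) (n : ℕ) : 0 ≤ poch' a n :=
  Finset.prod_nonneg fun i _ => by positivity

lemma poch'_one' (n : ℕ) : poch' 1 n = n.factorial := by
  induction n with
  | zero => simp [poch']
  | succ n ih => rw [poch'_succ, ih, Nat.factorial_succ]; push_cast; ring

lemma poch'_le_factorial {a : ℝ} (ha : 0 ≤ a) (ha1 : a ≤ 1) (n : ℕ) :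
    poch' a n ≤ n.factorial := by
  rw [← poch'_one' n]
  exact Finset.prod_le_prod (fun i _ => by positivity) (fun i _ => by linarith)

section Binomial

variable {a : ℝ}

/-- term of the binomial series -/
noncomputable def bg (a : ℝ) (n : ℕ) (y : ℝ) : ℝ := poch' a n / n.factorial * y ^ n

noncomputable def bg' (a : ℝ) (n : ℕ) (y : ℝ) : ℝ := poch' a n / n.factorial * (n * y ^ (n - 1))

lemma bg_hasDerivAt (n : ℕ) (y : ℝ) : HasDerivAt (bg a n) (bg' a n y) y := by
  exact (hasDerivAt_pow n y).const_mul (poch' a n / n.factorial)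

lemma poch'_div_factorial_le (ha : 0 ≤ a) (ha1 : a ≤ 1) (n : ℕ) :
    poch' a n / n.factorial ≤ 1 := by
  rw [div_le_one (by positivity)]
  exact poch'_le_factorial ha ha1 n

lemma bg_summable (ha : 0 ≤ a) (ha1 : a ≤ 1) {x : ℝ} (hx : |x| < 1) :
    Summable (fun n => bg a n x) := by
  apply Summable.of_norm
  apply Summable.of_nonneg_of_le (fun n => norm_nonneg _) (fun n => ?_)
    (summable_geometric_of_lt_one (abs_nonneg x) hx)
  have h1 : 0 ≤ poch' a n / n.factorial := div_nonneg (poch'_nonneg ha n) (by positivity)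
  calc ‖bg a n x‖ = poch' a n / n.factorial * |x| ^ n := by
        rw [bg, norm_mul, norm_pow, Real.norm_eq_abs, Real.norm_eq_abs, abs_of_nonneg h1]
    _ ≤ 1 * |x| ^ n := by
        apply mul_le_mul_of_nonneg_right (poch'_div_factorial_le ha ha1 n) (by positivity)
    _ = |x| ^ n := one_mul _

lemma ubound_summable {r : ℝ} (hr0 : 0 ≤ r) (hr1 : r < 1) :
    Summable (fun n : ℕ => (n : ℝ) * r ^ (n - 1)) := by
  rw [← summable_nat_add_iff 1]
  have h := (summable_pow_mul_geometric_of_norm_lt_one 1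
    (by rwa [Real.norm_eq_abs, abs_of_nonneg hr0] : ‖r‖ < 1)).add
    (summable_geometric_of_lt_one hr0 hr1)
  apply h.congr
  intro n
  push_cast
  ring

lemma bg'_bound (ha : 0 ≤ a) (ha1 : a ≤ 1) {r y : ℝ} (hy : |y| ≤ r) (n : ℕ) :
    ‖bg' a n y‖ ≤ (n : ℝ) * r ^ (n - 1) := by
  have hr0 : 0 ≤ r := le_trans (abs_nonneg y) hy
  have h1 : 0 ≤ poch' a n / n.factorial := div_nonneg (poch'_nonneg ha n) (by positivity)
  calc ‖bg' a n y‖ = poch' a n / n.factorial * ((n : ℝ) * |y| ^ (n - 1)) := by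
        rw [bg', norm_mul, norm_mul, norm_pow, Real.norm_eq_abs, Real.norm_eq_abs,
          Real.norm_eq_abs, abs_of_nonneg h1, Nat.abs_cast]
    _ ≤ 1 * ((n : ℝ) * r ^ (n - 1)) := by
        apply mul_le_mul (poch'_div_factorial_le ha ha1 n) _ (by positivity) zero_le_one
        exact mul_le_mul_of_nonneg_left (pow_le_pow_left₀ (abs_nonneg y) hy _) (n.cast_nonneg)
    _ = (n : ℝ) * r ^ (n - 1) := one_mul _

lemma bg'_summable (ha : 0 ≤ a) (ha1 : a ≤ 1) {x : ℝ} (hx : |x| < 1) :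
    Summable (fun n => bg' a n x) := by
  rcases exists_between hx with ⟨r, hr1, hr2⟩
  have hr0 : 0 ≤ r := le_trans (abs_nonneg x) hr1.le
  exact Summable.of_norm <| Summable.of_nonneg_of_le (fun n => norm_nonneg _)
    (fun n => bg'_bound ha ha1 hr1.le n) (ubound_summable hr0 hr2)

lemma bG_hasDerivAt (ha : 0 ≤ a) (ha1 : a ≤ 1) {x : ℝ} (hx : |x| < 1) :
    HasDerivAt (fun y => ∑' n, bg a n y) (∑' n, bg' a n x) x := by
  rcases exists_between hx with ⟨r, hr1, hr2⟩
  have hr0 : 0 < r := lt_of_le_of_lt (abs_nonneg x) hr1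
  apply hasDerivAt_tsum_of_isPreconnected (ubound_summable hr0.le hr2)
    (isOpen_Ioo (a := -r) (b := r)) (convex_Ioo _ _).isPreconnected
    (fun n y _ => bg_hasDerivAt n y)
    (fun n y hy => bg'_bound ha ha1 (abs_lt.mpr ⟨hy.1, hy.2⟩).le n)
    (Set.mem_Ioo.mpr ⟨neg_lt_zero.mpr hr0, hr0⟩) ?_ (Set.mem_Ioo.mpr (abs_lt.mp hr1))
  · exact bg_summable ha ha1 (x := 0) (by norm_num)

end Binomial

lemma bg_funct_eq (ha : 0 ≤ a) (ha1 : a ≤ 1) {x : ℝ} (hx : |x| < 1) :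
    (1 - x) * (∑' n, bg' a n x) = a * ∑' n, bg a n x := by
  have hg := bg_summable ha ha1 hx
  have hg' := bg'_summable ha ha1 hx
  have key : ∀ n : ℕ, bg' a (n + 1) x = a * bg a n x + x * bg' a n x := by
    intro n
    have hfac : ((n + 1).factorial : ℝ) = (n + 1) * n.factorial := by
      rw [Nat.factorial_succ]; push_cast; ring
    have hpow : (n : ℝ) * x ^ (n - 1) * x = n * x ^ n := by
      cases n with
      | zero => simp
      | succ m => rw [Nat.add_sub_cancel, pow_succ]; ring
    rw [bg', bg, bg', poch'_succ, Nat.add_sub_cancel, hfac]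
    have hnf : (n.factorial : ℝ) ≠ 0 := by positivity
    field_simp
    push_cast
    linear_combination (-1 * poch' a n * ((n:ℝ) + 1)) * hpow
  have hshift : Summable (fun n => bg' a (n + 1) x) := (summable_nat_add_iff 1).mpr hg'
  have hD : (∑' n, bg' a n x) = a * (∑' n, bg a n x) + x * (∑' n, bg' a n x) := by
    have h0 : bg' a 0 x = 0 := by simp [bg']
    calc (∑' n, bg' a n x) = bg' a 0 x + ∑' n, bg' a (n + 1) x := hg'.tsum_eq_zero_add
      _ = ∑' n, bg' a (n + 1) x := by rw [h0, zero_add]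
      _ = ∑' n, (a * bg a n x + x * bg' a n x) := tsum_congr key
      _ = (∑' n, a * bg a n x) + ∑' n, x * bg' a n x :=
          Summable.tsum_add (hg.mul_left a) (hg'.mul_left x)
      _ = a * (∑' n, bg a n x) + x * (∑' n, bg' a n x) := by rw [tsum_mul_left, tsum_mul_left]
  linear_combination hD

/-- The binomial series. -/
lemma binomial_hasSum (ha : 0 < a) (ha1 : a ≤ 1) {x : ℝ} (hx0 : 0 ≤ x) (hx1 : x < 1) :
    HasSum (fun n => poch' a n / n.factorial * x ^ n) ((1 - x) ^ (-a)) := by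
  have hxabs : |x| < 1 := abs_lt.mpr ⟨by linarith, hx1⟩
  have hsum := bg_summable ha.le ha1 hxabs
  have hG0 : (∑' n, bg a n 0) = 1 := by
    rw [tsum_eq_single 0 (fun n hn => by simp [bg, zero_pow hn])]
    simp [bg, poch']
  have hH : ∀ y ∈ Set.Icc (0:ℝ) x, HasDerivAt (fun z => (∑' n, bg a n z) * (1 - z) ^ a) 0 y := by
    intro y hy
    have hyx : y < 1 := lt_of_le_of_lt hy.2 hx1
    have hy1 : |y| < 1 := abs_lt.mpr ⟨by linarith [hy.1], hyx⟩
    have h1y : (0:ℝ) < 1 - y := by linarith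
    have hG := bG_hasDerivAt ha.le ha1 hy1
    have hr : HasDerivAt (fun z : ℝ => (1 - z) ^ a) (a * (1 - y) ^ (a - 1) * (-1)) y := by
      have h2 : HasDerivAt (fun z : ℝ => 1 - z) (-1) y := (hasDerivAt_id y).const_sub 1
      exact (Real.hasDerivAt_rpow_const (Or.inl h1y.ne')).comp y h2
    have hprod := hG.mul hr
    have hfe := bg_funct_eq ha.le ha1 hy1
    have hsplit : (1 - y) ^ a = (1 - y) ^ (a - 1) * (1 - y) := by
      calc (1 - y) ^ a = (1 - y) ^ (a - 1 + 1) := by norm_num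
        _ = (1 - y) ^ (a - 1) * (1 - y) ^ (1:ℝ) := Real.rpow_add h1y _ _
        _ = (1 - y) ^ (a - 1) * (1 - y) := by rw [Real.rpow_one]
    refine hprod.congr_deriv ?_
    rw [hsplit]
    linear_combination ((1 - y) ^ (a - 1)) * hfe
  have hconst := constant_of_has_deriv_right_zero
    (fun y hy => (hH y hy).continuousAt.continuousWithinAt)
    (fun y hy => ((hH y (Set.mem_Icc.mpr ⟨hy.1, hy.2.le⟩)).hasDerivWithinAt))
    x (Set.mem_Icc.mpr ⟨hx0, le_refl x⟩)
  have h1x : (0:ℝ) < 1 - x := by linarith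
  rw [hG0, sub_zero, Real.one_rpow, one_mul] at hconst
  have hc : (1 - x) ^ a ≠ 0 := (Real.rpow_pos_of_pos h1x a).ne'
  have hval : (∑' n, bg a n x) = (1 - x) ^ (-a) := by
    rw [Real.rpow_neg h1x.le, ← one_div]
    exact eq_div_of_mul_eq hc hconst
  exact hval ▸ hsum.hasSum


lemma poch'_pos {a : ℝ} (ha : 0 < a) (n : ℕ) : 0 < poch' a n :=
  Finset.prod_pos fun i _ => by positivity

lemma Gamma_nat_add {b : ℝ} (hb : 0 < b) (n : ℕ) :
    Real.Gamma (b + n) = poch' b n * Real.Gamma b := by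
  induction n with
  | zero => simp [poch']
  | succ n ih =>
    have h : b + (n + 1 : ℕ) = (b + n) + 1 := by push_cast; ring
    rw [h, Real.Gamma_add_one (by positivity), ih, poch'_succ]; ring

open MeasureTheory
/-- Real Euler beta integral. -/
lemma real_beta {p q : ℝ} (hp : 0 < p) (hq : 0 < q) :
    ∫ x in (0:ℝ)..1, x ^ (p - 1) * (1 - x) ^ (q - 1)
      = Real.Gamma p * Real.Gamma q / Real.Gamma (p + q) := by
  have h1 := Complex.Gamma_mul_Gamma_eq_betaIntegral
    (s := (p:ℂ)) (t := (q:ℂ)) (by simpa using hp) (by simpa using hq)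
  have h2 : Complex.betaIntegral p q
      = ((∫ x in (0:ℝ)..1, x ^ (p - 1) * (1 - x) ^ (q - 1) : ℝ) : ℂ) := by
    rw [Complex.betaIntegral, ← intervalIntegral.integral_ofReal]
    apply intervalIntegral.integral_congr
    intro x hx
    rw [Set.uIcc_of_le (by norm_num : (0:ℝ) ≤ 1)] at hx
    have hx0 : (0:ℝ) ≤ x := hx.1
    have hx1 : (0:ℝ) ≤ 1 - x := by linarith [hx.2]
    have e1 := Complex.ofReal_cpow hx0 (p - 1)
    have e2 := Complex.ofReal_cpow hx1 (q - 1)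
    push_cast at e1 e2 ⊢
    rw [← e1, ← e2]
  have hG : Complex.Gamma ((p:ℂ) + q) ≠ 0 := by
    rw [← Complex.ofReal_add, Complex.Gamma_ofReal]
    simpa using (Real.Gamma_pos_of_pos (by linarith)).ne'
  rw [h2] at h1
  have h3 : ((Real.Gamma p * Real.Gamma q : ℝ) : ℂ)
      = ((Real.Gamma (p + q) * ∫ x in (0:ℝ)..1, x ^ (p - 1) * (1 - x) ^ (q - 1) : ℝ) : ℂ) := by
    rw [Complex.ofReal_mul, Complex.ofReal_mul, ← Complex.Gamma_ofReal, ← Complex.Gamma_ofReal,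
      ← Complex.Gamma_ofReal, Complex.ofReal_add]
    exact h1
  have h4 := Complex.ofReal_injective h3
  have hGr : Real.Gamma (p + q) ≠ 0 := (Real.Gamma_pos_of_pos (by linarith)).ne'
  field_simp
  linarith [h4]

lemma beta_integrableOn {p q : ℝ} (hp : 0 < p) (hq : 0 < q) :
    IntegrableOn (fun x : ℝ => x ^ (p - 1) * (1 - x) ^ (q - 1)) (Set.Ioo 0 1) := by
  have h := Complex.betaIntegral_convergent (u := (p:ℂ)) (v := (q:ℂ))
    (by simpa using hp) (by simpa using hq)
  rw [intervalIntegrable_iff_integrableOn_Ioo_of_le (by norm_num)] at h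
  have h2 : IntegrableOn (fun x : ℝ => ‖(x:ℂ) ^ ((p:ℂ) - 1) * (1 - (x:ℂ)) ^ ((q:ℂ) - 1)‖)
      (Set.Ioo 0 1) := h.norm
  apply h2.congr_fun ?_ measurableSet_Ioo
  intro x hx
  have hx0 : (0:ℝ) < x := hx.1
  have hx1 : (0:ℝ) < 1 - x := by linarith [hx.2]
  simp only [norm_mul]
  have e1 := Complex.norm_cpow_eq_rpow_re_of_pos hx0 ((p:ℂ) - 1)
  have e2 := Complex.norm_cpow_eq_rpow_re_of_pos hx1 ((q:ℂ) - 1)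
  push_cast at e1 e2 ⊢
  rw [e1, e2]
  norm_num

section Gauss

variable {a b : ℝ}

/-- the integrand family -/
noncomputable def FF (a b : ℝ) (n : ℕ) (x : ℝ) : ℝ :=
  poch' a n / n.factorial * (x ^ ((n : ℝ) + b - 1) * (1 - x) ^ ((1 - b) - 1))

lemma FF_integrableOn (ha : 0 < a) (hb : 0 < b) (hb1 : b < 1) (n : ℕ) :
    IntegrableOn (FF a b n) (Set.Ioo 0 1) :=
  (beta_integrableOn (p := (n : ℝ) + b) (by positivity) (by linarith)).const_mul _

lemma FF_nonneg (ha : 0 < a) (n : ℕ) {x : ℝ} (hx : x ∈ Set.Ioo (0:ℝ) 1) : 0 ≤ FF a b n x := by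
  have h1 : (0:ℝ) < x := hx.1
  have h2 : (0:ℝ) < 1 - x := by linarith [hx.2]
  have h3 : (0:ℝ) ≤ poch' a n / n.factorial :=
    div_nonneg (poch'_nonneg ha.le n) (by positivity)
  have h4 : (0:ℝ) ≤ x ^ ((n : ℝ) + b - 1) := Real.rpow_nonneg h1.le _
  have h5 : (0:ℝ) ≤ (1 - x) ^ ((1 - b) - 1) := Real.rpow_nonneg h2.le _
  exact mul_nonneg h3 (mul_nonneg h4 h5)

lemma FF_integral (ha : 0 < a) (hb : 0 < b) (hb1 : b < 1) (n : ℕ) :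
    ∫ x in Set.Ioo (0:ℝ) 1, FF a b n x
      = poch' a n / n.factorial *
        (Real.Gamma ((n : ℝ) + b) * Real.Gamma (1 - b) / (n.factorial : ℝ)) := by
  have h1 : ∫ x in Set.Ioo (0:ℝ) 1, FF a b n x
      = poch' a n / n.factorial *
        ∫ x in Set.Ioo (0:ℝ) 1, x ^ (((n : ℝ) + b) - 1) * (1 - x) ^ ((1 - b) - 1) := by
    rw [← MeasureTheory.integral_const_mul]
    apply MeasureTheory.integral_congr_ae
    filter_upwards with x
    simp only [FF]
  rw [h1, ← MeasureTheory.integral_Ioc_eq_integral_Ioo,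
    ← intervalIntegral.integral_of_le (by norm_num : (0:ℝ) ≤ 1),
    real_beta (by positivity : (0:ℝ) < (n:ℝ) + b) (by linarith : (0:ℝ) < 1 - b)]
  have : (n : ℝ) + b + (1 - b) = (n : ℝ) + 1 := by ring
  rw [this, Real.Gamma_nat_eq_factorial]

end Gauss

lemma FF_aemeasurable (n : ℕ) :
    AEMeasurable (fun x => ENNReal.ofReal (FF a b n x))
      (volume.restrict (Set.Ioo (0:ℝ) 1)) := by
  have h1 : ContinuousOn (fun x : ℝ => x ^ ((n:ℝ) + b - 1)) (Set.Ioo 0 1) := fun x hx =>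
    (Real.continuousAt_rpow_const x _ (Or.inl hx.1.ne')).continuousWithinAt
  have h2 : ContinuousOn (fun x : ℝ => (1 - x) ^ ((1 - b) - 1)) (Set.Ioo 0 1) := by
    intro x hx
    have hx1 : (1:ℝ) - x ≠ 0 := by have := hx.2; intro h; simp only [Set.mem_Ioo] at hx; linarith
    exact ((Real.continuousAt_rpow_const (1 - x) _ (Or.inl hx1)).comp
      (continuousAt_const.sub continuousAt_id)).continuousWithinAt
  exact ((continuousOn_const.mul (h1.mul h2)).aemeasurable measurableSet_Ioo).ennreal_ofReal

lemma FF_hasSum (ha : 0 < a) (ha1 : a ≤ 1) (hb : 0 < b) {x : ℝ}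
    (hx : x ∈ Set.Ioo (0:ℝ) 1) :
    HasSum (fun n => FF a b n x) (x ^ (b - 1) * (1 - x) ^ ((1 - a - b) - 1)) := by
  have hx0 : (0:ℝ) < x := hx.1
  have hx1 : (0:ℝ) < 1 - x := by linarith [hx.2]
  have h := (binomial_hasSum ha ha1 hx0.le hx.2).mul_right (x ^ (b - 1) * (1 - x) ^ (-b))
  have heq : (fun n => poch' a n / n.factorial * x ^ n * (x ^ (b - 1) * (1 - x) ^ (-b)))
      = fun n => FF a b n x := by
    funext n
    have e1 : x ^ ((n:ℝ) + b - 1) = x ^ (n:ℝ) * x ^ (b - 1) := by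
      rw [show (n:ℝ) + b - 1 = (n:ℝ) + (b - 1) by ring, Real.rpow_add hx0]
    have e2 : (1 - x) ^ ((1 - b) - 1) = (1 - x) ^ (-b) := by norm_num
    rw [FF, e1, e2, Real.rpow_natCast]
    ring
  rw [heq] at h
  convert h using 1
  · rfl
  have e3 : (1 - x) ^ (1 - a - b - 1) = (1 - x) ^ (-a) * (1 - x) ^ (-b) := by
    rw [show 1 - a - b - 1 = -a + -b by ring, Real.rpow_add hx1]
  rw [e3]
  ring

lemma gauss_c (ha : 0 < a) (ha1 : a ≤ 1) (hb : 0 < b) (hb1 : b < 1) (hab : a + b < 1) :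
    Summable (fun n => ∫ x in Set.Ioo (0:ℝ) 1, FF a b n x) ∧
    ∑' n, (∫ x in Set.Ioo (0:ℝ) 1, FF a b n x)
      = Real.Gamma b * Real.Gamma (1 - a - b) / Real.Gamma (1 - a) := by
  set c := fun n => ∫ x in Set.Ioo (0:ℝ) 1, FF a b n x with hc
  set T := fun x : ℝ => x ^ (b - 1) * (1 - x) ^ ((1 - a - b) - 1) with hT
  have hT_int : IntegrableOn T (Set.Ioo 0 1) := beta_integrableOn hb (by linarith)
  have hT_nonneg : ∀ x ∈ Set.Ioo (0:ℝ) 1, 0 ≤ T x := by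
    intro x hx
    have hx1 : (0:ℝ) < 1 - x := by linarith [hx.2]
    exact mul_nonneg (Real.rpow_nonneg hx.1.le _) (Real.rpow_nonneg hx1.le _)
  have hT_val : ∫ x in Set.Ioo (0:ℝ) 1, T x
      = Real.Gamma b * Real.Gamma (1 - a - b) / Real.Gamma (1 - a) := by
    rw [hT, ← MeasureTheory.integral_Ioc_eq_integral_Ioo,
      ← intervalIntegral.integral_of_le (by norm_num : (0:ℝ) ≤ 1),
      real_beta hb (by linarith : (0:ℝ) < 1 - a - b),
      show b + (1 - a - b) = 1 - a by ring]
  have hc_nonneg : ∀ n, 0 ≤ c n := fun n =>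
    MeasureTheory.setIntegral_nonneg measurableSet_Ioo (fun x hx => FF_nonneg ha n hx)
  have haeFF : ∀ n : ℕ, 0 ≤ᵐ[volume.restrict (Set.Ioo (0:ℝ) 1)] FF a b n := fun n =>
    (MeasureTheory.ae_restrict_iff' measurableSet_Ioo).mpr
      (MeasureTheory.ae_of_all _ (fun x hx => FF_nonneg ha n hx))
  have haeT : 0 ≤ᵐ[volume.restrict (Set.Ioo (0:ℝ) 1)] T :=
    (MeasureTheory.ae_restrict_iff' measurableSet_Ioo).mpr
      (MeasureTheory.ae_of_all _ hT_nonneg)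
  have key : ∑' n, ENNReal.ofReal (c n) = ENNReal.ofReal (∫ x in Set.Ioo (0:ℝ) 1, T x) := by
    calc ∑' n, ENNReal.ofReal (c n)
        = ∑' n, ∫⁻ x in Set.Ioo (0:ℝ) 1, ENNReal.ofReal (FF a b n x) := by
          refine tsum_congr fun n => ?_
          exact MeasureTheory.ofReal_integral_eq_lintegral_ofReal
            (FF_integrableOn ha hb hb1 n) (haeFF n)
      _ = ∫⁻ x in Set.Ioo (0:ℝ) 1, ∑' n, ENNReal.ofReal (FF a b n x) :=
          (MeasureTheory.lintegral_tsum (fun n => FF_aemeasurable n)).symm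
      _ = ∫⁻ x in Set.Ioo (0:ℝ) 1, ENNReal.ofReal (T x) := by
          apply MeasureTheory.lintegral_congr_ae
          refine (MeasureTheory.ae_restrict_iff' measurableSet_Ioo).mpr
            (MeasureTheory.ae_of_all _ (fun x hx => ?_))
          have hsum := FF_hasSum ha ha1 hb hx
          show (∑' n, ENNReal.ofReal (FF a b n x)) = ENNReal.ofReal (T x)
          rw [← ENNReal.ofReal_tsum_of_nonneg (fun n => FF_nonneg ha n hx) hsum.summable,
            hsum.tsum_eq]
      _ = ENNReal.ofReal (∫ x in Set.Ioo (0:ℝ) 1, T x) :=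
          (MeasureTheory.ofReal_integral_eq_lintegral_ofReal hT_int haeT).symm
  have hfin : (∑' n, ENNReal.ofReal (c n)) ≠ ⊤ := by
    rw [key]; exact ENNReal.ofReal_ne_top
  have hsummable : Summable c := by
    have h := ENNReal.summable_toReal hfin
    refine h.congr fun n => ?_
    exact ENNReal.toReal_ofReal (hc_nonneg n)
  constructor
  · exact hsummable
  · have h2 := ENNReal.tsum_toReal_eq (f := fun n => ENNReal.ofReal (c n))
      (fun n => ENNReal.ofReal_ne_top)
    rw [key, ENNReal.toReal_ofReal (MeasureTheory.setIntegral_nonneg measurableSet_Ioo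
      hT_nonneg)] at h2
    have h3 : ∑' n, (ENNReal.ofReal (c n)).toReal = ∑' n, c n :=
      tsum_congr fun n => ENNReal.toReal_ofReal (hc_nonneg n)
    rw [h3] at h2
    rw [← h2, hT_val]

lemma gauss_sum (ha : 0 < a) (hb : 0 < b) (hab : a + b < 1) :
    Summable (fun n => poch' a n * poch' b n / ((n.factorial : ℝ) * n.factorial)) ∧
    ∑' n, poch' a n * poch' b n / ((n.factorial : ℝ) * n.factorial)
      = Real.Gamma (1 - a - b) / (Real.Gamma (1 - a) * Real.Gamma (1 - b)) := by
  have ha1 : a ≤ 1 := by linarith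
  have hb1 : b < 1 := by linarith
  obtain ⟨hsum, hval⟩ := gauss_c ha ha1 hb hb1 hab
  have hcn : ∀ n : ℕ, (∫ x in Set.Ioo (0:ℝ) 1, FF a b n x)
      = (Real.Gamma b * Real.Gamma (1 - b)) *
        (poch' a n * poch' b n / ((n.factorial : ℝ) * n.factorial)) := by
    intro n
    rw [FF_integral ha hb hb1 n, show ((n:ℝ) + b) = b + n by ring, Gamma_nat_add hb n]
    field_simp
  have hKpos : 0 < Real.Gamma b * Real.Gamma (1 - b) :=
    mul_pos (Real.Gamma_pos_of_pos hb) (Real.Gamma_pos_of_pos (by linarith))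
  have hrw : (fun n : ℕ => poch' a n * poch' b n / ((n.factorial : ℝ) * n.factorial))
      = fun n => (Real.Gamma b * Real.Gamma (1 - b))⁻¹ *
          (∫ x in Set.Ioo (0:ℝ) 1, FF a b n x) := by
    funext n
    rw [hcn n, ← mul_assoc, inv_mul_cancel₀ hKpos.ne', one_mul]
  constructor
  · rw [hrw]; exact hsum.mul_left _
  · rw [hrw, tsum_mul_left, hval]
    have h1 : Real.Gamma (1 - a) ≠ 0 := (Real.Gamma_pos_of_pos (by linarith)).ne'
    have h2 : Real.Gamma (1 - b) ≠ 0 := (Real.Gamma_pos_of_pos (by linarith)).ne'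
    have h3 : Real.Gamma b ≠ 0 := (Real.Gamma_pos_of_pos hb).ne'
    field_simp

noncomputable def triplingGamma (s : ℝ) : ℝ :=
  Gamma (s / 3) * Gamma (s / 3 + 1 / 3) * Gamma (s / 3 + 2 / 3) * 3 ^ (s - 1) * Real.sqrt 3 /
    (2 * π)

theorem triplingGamma_add_one (s : ℝ) (hs : s ≠ 0) :
    triplingGamma (s + 1) = s * triplingGamma s := by
  have h1 : (s + 1) / 3 = s / 3 + 1 / 3 := by ring
  have h2 : s / 3 + 1 / 3 + 1 / 3 = s / 3 + 2 / 3 := by ring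
  have h3 : s / 3 + 1 / 3 + 2 / 3 = s / 3 + 1 := by ring
  rw [triplingGamma, triplingGamma, h1, h2, h3, Real.Gamma_add_one (div_ne_zero hs three_ne_zero),
    show s + 1 - 1 = s - 1 + 1 by ring, Real.rpow_add three_pos, Real.rpow_one]
  ring

theorem triplingGamma_one : triplingGamma 1 = 1 := by
  have h := Real.Gamma_mul_Gamma_one_sub (1/3)
  rw [show (1:ℝ) - 1/3 = 2/3 by norm_num] at h
  have hsin : Real.sin (π * (1/3)) = Real.sqrt 3 / 2 := by
    rw [show π * (1/3) = π/3 by ring, Real.sin_pi_div_three]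
  rw [hsin] at h
  have hs3 : (0:ℝ) < Real.sqrt 3 := Real.sqrt_pos.mpr (by norm_num)
  rw [triplingGamma]
  rw [show (1:ℝ)/3 + 2/3 = 1 by norm_num, Real.Gamma_one, show (1:ℝ) - 1 = 0 by norm_num,
    Real.rpow_zero, show (1:ℝ)/3 + 1/3 = 2/3 by norm_num]
  rw [show Gamma (1/3) * Gamma (2/3) * 1 * 1 * Real.sqrt 3 / (2*π)
      = (Gamma (1/3) * Gamma (2/3)) * Real.sqrt 3 / (2*π) by ring, h]
  field_simp

lemma conv_aux {c : ℝ} (hc : 0 ≤ c) :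
    ConvexOn ℝ (Set.Ioi (0:ℝ)) (fun s : ℝ => Real.log (Real.Gamma (s / 3 + c))) := by
  set A := (DistribMulAction.toLinearMap ℝ ℝ (3⁻¹ : ℝ)).toAffineMap + AffineMap.const ℝ ℝ c with hA
  have hAx : ∀ x : ℝ, A x = x / 3 + c := by
    intro x
    simp [hA, smul_eq_mul]
    show (3⁻¹ : ℝ) • x = x / 3
    rw [smul_eq_mul]; ring
  have h := convexOn_log_Gamma.comp_affineMap A
  have hsub : Set.Ioi (0:ℝ) ⊆ A ⁻¹' (Set.Ioi 0) := by
    intro x hx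
    simp only [Set.mem_preimage, hAx, Set.mem_Ioi]
    have : (0:ℝ) < x := hx
    positivity
  have h2 := h.subset hsub (convex_Ioi 0)
  apply h2.congr
  intro x hx
  simp [Function.comp, hAx]

theorem triplingGamma_log_convex : ConvexOn ℝ (Set.Ioi (0:ℝ)) (Real.log ∘ triplingGamma) := by
  have heq : Set.EqOn (Real.log ∘ triplingGamma)
      (fun s => (Real.log (Gamma (s / 3)) + Real.log (Gamma (s / 3 + 1 / 3))
        + Real.log (Gamma (s / 3 + 2 / 3)) + s * Real.log 3)

        + (Real.log (Real.sqrt 3) - Real.log 3 - Real.log (2 * π))) (Set.Ioi 0) := by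
    intro s hs
    have hs0 : (0:ℝ) < s := hs
    have h1 : Gamma (s / 3) ≠ 0 := (Real.Gamma_pos_of_pos (by positivity)).ne'
    have h2 : Gamma (s / 3 + 1 / 3) ≠ 0 := (Real.Gamma_pos_of_pos (by positivity)).ne'
    have h3 : Gamma (s / 3 + 2 / 3) ≠ 0 := (Real.Gamma_pos_of_pos (by positivity)).ne'
    have h4 : (3:ℝ) ^ (s - 1) ≠ 0 := (Real.rpow_pos_of_pos three_pos _).ne'
    have h5 : Real.sqrt 3 ≠ 0 := (Real.sqrt_pos.mpr (by norm_num)).ne'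
    have h6 : (2:ℝ) * π ≠ 0 := by positivity
    simp only [Function.comp_apply, triplingGamma]
    rw [Real.log_div (mul_ne_zero (mul_ne_zero (mul_ne_zero (mul_ne_zero h1 h2) h3) h4) h5) h6,
      Real.log_mul (mul_ne_zero (mul_ne_zero (mul_ne_zero h1 h2) h3) h4) h5,
      Real.log_mul (mul_ne_zero (mul_ne_zero h1 h2) h3) h4,
      Real.log_mul (mul_ne_zero h1 h2) h3,
      Real.log_mul h1 h2, Real.log_rpow three_pos]
    ring
  have lin : ConvexOn ℝ (Set.Ioi (0:ℝ)) (fun s : ℝ => s * Real.log 3) := by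
    simpa only [smul_eq_mul, mul_comm, id] using
      (convexOn_id (convex_Ioi (0:ℝ))).smul (Real.log_nonneg (by norm_num))
  have c1 : ConvexOn ℝ (Set.Ioi (0:ℝ)) (fun s : ℝ => Real.log (Gamma (s / 3))) := by
    have := conv_aux (le_refl (0:ℝ))
    apply this.congr
    intro x _
    simp only [add_zero]
  have csum := (((c1.add (conv_aux (by norm_num : (0:ℝ) ≤ 1/3))).add
    (conv_aux (by norm_num : (0:ℝ) ≤ 2/3))).add lin).add_const
    (Real.log (Real.sqrt 3) - Real.log 3 - Real.log (2 * π))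
  exact csum.congr heq.symm

theorem triplingGamma_eq_Gamma {s : ℝ} (hs : 0 < s) : triplingGamma s = Gamma s := by
  refine Real.eq_Gamma_of_log_convex triplingGamma_log_convex
    (fun {y} hy => triplingGamma_add_one y hy.ne') (fun {y} hy => ?_) triplingGamma_one hs
  exact div_pos (mul_pos (mul_pos (mul_pos (mul_pos
    (Real.Gamma_pos_of_pos (by positivity)) (Real.Gamma_pos_of_pos (by positivity)))
    (Real.Gamma_pos_of_pos (by positivity))) (Real.rpow_pos_of_pos three_pos _))
    (Real.sqrt_pos.mpr (by norm_num))) (by positivity)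

lemma sin_prod : Real.sin (π * (1/12)) * Real.sin (π * (5/12)) = 1/4 := by
  have h1 : π * (5/12) = π/2 - π * (1/12) := by ring
  rw [h1, Real.sin_pi_div_two_sub]
  have h2 := Real.sin_two_mul (π * (1/12))
  rw [show 2 * (π * (1/12)) = π/6 by ring, Real.sin_pi_div_six] at h2
  linarith

lemma gamma_prod : Real.Gamma (11/12) * Real.Gamma (7/12)
    = 2 * π * Real.Gamma (3/4) / ((3:ℝ) ^ ((1:ℝ)/4) * Real.Gamma (1/4)) := by
  set X : ℝ := (3:ℝ) ^ ((1:ℝ)/4) with hXdef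
  have hX : 0 < X := Real.rpow_pos_of_pos three_pos _
  have h3pow : (3:ℝ) ^ ((1:ℝ)/4 - 1) * Real.sqrt 3 = X⁻¹ := by
    rw [Real.sqrt_eq_rpow, ← Real.rpow_add three_pos,
      show (1:ℝ)/4 - 1 + 1/2 = -(1/4) by norm_num, hXdef, ← Real.rpow_neg three_pos.le]
  -- Gamma positivity
  have g112 : 0 < Real.Gamma (1/12) := Real.Gamma_pos_of_pos (by norm_num)
  have g512 : 0 < Real.Gamma (5/12) := Real.Gamma_pos_of_pos (by norm_num)
  have g712 : 0 < Real.Gamma (7/12) := Real.Gamma_pos_of_pos (by norm_num)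
  have g1112 : 0 < Real.Gamma (11/12) := Real.Gamma_pos_of_pos (by norm_num)
  have g14 : 0 < Real.Gamma (1/4) := Real.Gamma_pos_of_pos (by norm_num)
  have g34 : 0 < Real.Gamma (3/4) := Real.Gamma_pos_of_pos (by norm_num)
  have s1pos : 0 < Real.sin (π * (1/12)) :=
    Real.sin_pos_of_pos_of_lt_pi (by positivity) (by nlinarith [pi_pos])
  have s2pos : 0 < Real.sin (π * (5/12)) :=
    Real.sin_pos_of_pos_of_lt_pi (by positivity) (by nlinarith [pi_pos])
  -- reflection
  have R1 := Real.Gamma_mul_Gamma_one_sub (1/12)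
  rw [show (1:ℝ) - 1/12 = 11/12 by norm_num] at R1
  have R2 := Real.Gamma_mul_Gamma_one_sub (5/12)
  rw [show (1:ℝ) - 5/12 = 7/12 by norm_num] at R2
  have e1 : Real.Gamma (1/12) * Real.Gamma (11/12) * Real.sin (π * (1/12)) = π := by
    rw [R1, div_mul_cancel₀ _ s1pos.ne']
  have e2 : Real.Gamma (5/12) * Real.Gamma (7/12) * Real.sin (π * (5/12)) = π := by
    rw [R2, div_mul_cancel₀ _ s2pos.ne']
  -- triplication at 1/4
  have T := triplingGamma_eq_Gamma (s := 1/4) (by norm_num)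
  rw [triplingGamma, show (1:ℝ)/4/3 = 1/12 by norm_num, show (1:ℝ)/12 + 1/3 = 5/12 by norm_num,
    show (1:ℝ)/12 + 2/3 = 3/4 by norm_num] at T
  rw [div_eq_iff (by positivity : (2:ℝ) * π ≠ 0)] at T
  have e3 : Real.Gamma (1/12) * Real.Gamma (5/12) * Real.Gamma (3/4) * X⁻¹
      = Real.Gamma (1/4) * (2 * π) := by
    calc Real.Gamma (1/12) * Real.Gamma (5/12) * Real.Gamma (3/4) * X⁻¹
        = Real.Gamma (1/12) * Real.Gamma (5/12) * Real.Gamma (3/4) *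
            ((3:ℝ) ^ ((1:ℝ)/4 - 1) * Real.sqrt 3) := by rw [h3pow]
      _ = Real.Gamma (1/12) * Real.Gamma (5/12) * Real.Gamma (3/4) *
            (3:ℝ) ^ ((1:ℝ)/4 - 1) * Real.sqrt 3 := by ring
      _ = Real.Gamma (1/4) * (2 * π) := T
  have e3' : Real.Gamma (1/12) * Real.Gamma (5/12) * Real.Gamma (3/4)
      = Real.Gamma (1/4) * (2 * π) * X := by
    field_simp at e3
    linarith [e3]
  have e4 : (Real.Gamma (1/12) * Real.Gamma (5/12)) *
      (Real.Gamma (11/12) * Real.Gamma (7/12)) = 4 * π^2 := by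
    have h12 : (Real.Gamma (1/12) * Real.Gamma (11/12) * Real.sin (π * (1/12))) *
        (Real.Gamma (5/12) * Real.Gamma (7/12) * Real.sin (π * (5/12))) = π * π := by
      rw [e1, e2]
    linear_combination 4 * h12 + (-4 * (Real.Gamma (1/12) * Real.Gamma (5/12) *
      Real.Gamma (11/12) * Real.Gamma (7/12))) * sin_prod
  -- combine
  rw [eq_div_iff (by positivity : X * Real.Gamma (1/4) ≠ 0)]
  have hπ : (0:ℝ) < π := pi_pos
  -- from e3' : G1*G5 = Γ(1/4)*2π*X/Γ(3/4)
  have e5 : Real.Gamma (1/12) * Real.Gamma (5/12)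
      = Real.Gamma (1/4) * (2 * π) * X / Real.Gamma (3/4) := by
    rw [eq_div_iff g34.ne']
    linear_combination e3'
  rw [e5] at e4
  field_simp at e4
  nlinarith [e4, g14.ne', hX.ne']


theorem stmt12 :
    Summable (fun n : ℕ => poch (1 / 12) n * poch (5 / 12) n / (poch 1 n * (n.factorial : ℝ))) ∧
    ∑' n : ℕ, poch (1 / 12) n * poch (5 / 12) n / (poch 1 n * (n.factorial : ℝ))
      = (3 : ℝ) ^ ((1 : ℝ) / 4) * Real.Gamma (1 / 4) /
          (2 * Real.sqrt Real.pi * Real.Gamma (3 / 4)) ∧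
    ∑' n : ℕ, poch (1 / 12) n * poch (5 / 12) n / (poch 1 n * (n.factorial : ℝ))
      = (3 : ℝ) ^ ((1 : ℝ) / 4) / 2 *
          ((Real.sqrt Real.pi * Real.Gamma (1 / 4) / Real.Gamma (3 / 4)) / Real.pi) := by
  obtain ⟨hsum, hval⟩ := gauss_sum (a := 1/12) (b := 5/12) (by norm_num) (by norm_num) (by norm_num)
  have hfun : (fun n : ℕ => poch (1/12) n * poch (5/12) n / (poch 1 n * (n.factorial : ℝ)))
      = fun n : ℕ => poch' (1/12) n * poch' (5/12) n / ((n.factorial : ℝ) * n.factorial) := by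
    funext n
    rw [poch_eq_poch', poch_eq_poch', poch_eq_poch', poch'_one']
  have hkey : ∑' n : ℕ, poch (1/12) n * poch (5/12) n / (poch 1 n * (n.factorial : ℝ))
      = Real.sqrt π / (Real.Gamma (11/12) * Real.Gamma (7/12)) := by
    rw [hfun, hval, show (1:ℝ) - 1/12 - 5/12 = 1/2 by norm_num,
      show (1:ℝ) - 1/12 = 11/12 by norm_num, show (1:ℝ) - 5/12 = 7/12 by norm_num,
      Real.Gamma_one_half_eq]
  have g14 : 0 < Real.Gamma (1/4) := Real.Gamma_pos_of_pos (by norm_num)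
  have g34 : 0 < Real.Gamma (3/4) := Real.Gamma_pos_of_pos (by norm_num)
  have hX : (0:ℝ) < (3:ℝ) ^ ((1:ℝ)/4) := Real.rpow_pos_of_pos three_pos _
  have hsq : Real.sqrt π * Real.sqrt π = π := Real.mul_self_sqrt pi_pos.le
  have hsp : (0:ℝ) < Real.sqrt π := Real.sqrt_pos.mpr pi_pos
  have hmain : Real.sqrt π / (Real.Gamma (11/12) * Real.Gamma (7/12))
      = (3:ℝ) ^ ((1:ℝ)/4) * Real.Gamma (1/4) / (2 * Real.sqrt π * Real.Gamma (3/4)) := by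
    rw [gamma_prod]
    rw [div_div_eq_mul_div, div_eq_div_iff (by positivity) (by positivity)]
    linear_combination (2 * (3:ℝ)^((1:ℝ)/4) * Real.Gamma (1/4) * Real.Gamma (3/4)) * hsq
  refine ⟨?_, ?_, ?_⟩
  · rw [show (fun n : ℕ => poch (1/12) n * poch (5/12) n / (poch 1 n * (n.factorial : ℝ)))
        = fun n : ℕ => poch' (1/12) n * poch' (5/12) n / ((n.factorial : ℝ) * n.factorial)
      from hfun]
    exact hsum
  · rw [hkey]
    exact hmain
  · rw [hkey, gamma_prod, div_div_eq_mul_div]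
    rw [div_eq_iff (by positivity : 2 * π * Real.Gamma (3/4) ≠ 0)]
    field_simp
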